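/- Let (X, μ) be a measure space, let d ≥ 1 be a natural number, and let a > 0, γ > 1, 0 < ρ̲ ≤ ρ̄ be real numbers. Let ρ, r : X → ℝ be measurable with 0 ≤ ρ(x) and ρ̲ ≤ r(x) ≤ ρ̄ for μ-a.e. x, and let u, U : X → ℝ^d be measurable. Then for every δ ∈ (0,1) there is a constant C > 0, depending only on a, γ, ρ̲, ρ̄, δ (and not on ρ, r, u, U, μ), such that ∫_X |ρ − r| ‖u − U‖ dμ ≤ δ ∫_X ‖u − U‖² dμ + C ∫_X ( (1/2) ρ ‖u − U‖² + E_P(ρ|r) ) dμ, where E_P(ρ|r) = P(ρ) − P'(r)(ρ − r) − P(r), P(ρ) = a ρ^γ/(γ−1), and the integrals are Lebesgue integrals of nonnegative measurable functions (taking values in [0, ∞]). -/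

import Mathlib

open MeasureTheory

/-- Pressure potential `P(ρ) = a ρ^γ / (γ - 1)` (real power). -/
noncomputable def Ppot (a γ ρ : ℝ) : ℝ := a * ρ ^ γ / (γ - 1)

/-- Derivative of the pressure potential, `P'(r) = a γ r^(γ-1) / (γ - 1)`. -/
noncomputable def dPpot (a γ r : ℝ) : ℝ := a * γ * r ^ (γ - 1) / (γ - 1)

/-- Relative pressure potential `E_P(ρ|r) = P(ρ) - P'(r)(ρ - r) - P(r)`. -/
noncomputable def EP (a γ ρ r : ℝ) : ℝ :=
  Ppot a γ ρ - dPpot a γ r * (ρ - r) - Ppot a γ r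

set_option maxHeartbeats 1000000

open Real in
/-- Tangent line inequality for `rpow`, convex case `1 ≤ p`. -/
lemma rpow_tangent_ge {x y p : ℝ} (hx : 0 ≤ x) (hy : 0 < y) (hp : 1 ≤ p) :
    y ^ p + p * y ^ (p - 1) * (x - y) ≤ x ^ p := by
  have hs : (-1 : ℝ) ≤ x / y - 1 := by
    have : 0 ≤ x / y := div_nonneg hx hy.le
    linarith
  have hB := one_add_mul_self_le_rpow_one_add hs hp
  have h1 : (1 : ℝ) + (x / y - 1) = x / y := by ring
  rw [h1, Real.div_rpow hx hy.le] at hB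
  have hyp : 0 < y ^ p := rpow_pos_of_pos hy p
  have hyp1 : y ^ (p - 1) * y = y ^ p := by
    rw [← Real.rpow_add_one hy.ne' (p - 1)]; ring_nf
  have h2 := mul_le_mul_of_nonneg_left hB hyp.le
  have h3 : y ^ p * (x ^ p / y ^ p) = x ^ p := by field_simp
  rw [h3] at h2
  calc y ^ p + p * y ^ (p - 1) * (x - y)
      = y ^ p * (1 + p * (x / y - 1)) := by
        rw [← hyp1]; field_simp
    _ ≤ x ^ p := h2

open Real in
/-- Tangent line inequality for `rpow`, concave case `0 ≤ p ≤ 1`. -/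
lemma rpow_tangent_le {x y p : ℝ} (hx : 0 ≤ x) (hy : 0 < y) (hp0 : 0 ≤ p) (hp1 : p ≤ 1) :
    x ^ p ≤ y ^ p + p * y ^ (p - 1) * (x - y) := by
  have hs : (-1 : ℝ) ≤ x / y - 1 := by
    have : 0 ≤ x / y := div_nonneg hx hy.le
    linarith
  have hB := rpow_one_add_le_one_add_mul_self hs hp0 hp1
  have h1 : (1 : ℝ) + (x / y - 1) = x / y := by ring
  rw [h1, Real.div_rpow hx hy.le] at hB
  have hyp : 0 < y ^ p := rpow_pos_of_pos hy p
  have hyp1 : y ^ (p - 1) * y = y ^ p := by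
    rw [← Real.rpow_add_one hy.ne' (p - 1)]; ring_nf
  have h2 := mul_le_mul_of_nonneg_left hB hyp.le
  have h3 : y ^ p * (x ^ p / y ^ p) = x ^ p := by field_simp
  rw [h3] at h2
  calc x ^ p ≤ y ^ p * (1 + p * (x / y - 1)) := h2
    _ = y ^ p + p * y ^ (p - 1) * (x - y) := by
        rw [← hyp1]; field_simp

/-- Uniform slope lower bound for `rpow` on an interval `[m, M]`. -/
lemma rpow_slope_lb {m M p x y : ℝ} (hm : 0 < m) (hp : 0 < p)
    (hx1 : m ≤ x) (hx2 : x ≤ M) (hy1 : m ≤ y) (hy2 : y ≤ M) (hyx : y ≤ x) :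
    p * min (m ^ (p - 1)) (M ^ (p - 1)) * (x - y) ≤ x ^ p - y ^ p := by
  have hxpos : 0 < x := lt_of_lt_of_le hm hx1
  have hypos : 0 < y := lt_of_lt_of_le hm hy1
  rcases le_or_gt 1 p with hp1 | hp1
  · have ht := rpow_tangent_ge hxpos.le hypos hp1
    have h1 : m ^ (p - 1) ≤ y ^ (p - 1) := Real.rpow_le_rpow hm.le hy1 (by linarith)
    have h2 : min (m ^ (p - 1)) (M ^ (p - 1)) ≤ y ^ (p - 1) :=
      le_trans (min_le_left _ _) h1
    nlinarith [mul_le_mul_of_nonneg_right h2 (sub_nonneg.mpr hyx), hp.le,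
      mul_le_mul_of_nonneg_left (mul_le_mul_of_nonneg_right h2 (sub_nonneg.mpr hyx)) hp.le]
  · have ht := rpow_tangent_le hypos.le hxpos hp.le hp1.le
    have h1 : M ^ (p - 1) ≤ x ^ (p - 1) :=
      Real.rpow_le_rpow_of_nonpos hxpos hx2 (by linarith)
    have h2 : min (m ^ (p - 1)) (M ^ (p - 1)) ≤ x ^ (p - 1) :=
      le_trans (min_le_right _ _) h1
    nlinarith [mul_le_mul_of_nonneg_left (mul_le_mul_of_nonneg_right h2 (sub_nonneg.mpr hyx)) hp.le]

/-- Quadratic coercivity of the relative-pressure bracket on a compact interval. -/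
lemma G_quad {γ m M x y : ℝ} (hγ : 1 < γ) (hm : 0 < m)
    (hx1 : m ≤ x) (hx2 : x ≤ M) (hy1 : m ≤ y) (hy2 : y ≤ M) :
    γ * ((γ - 1) * min (m ^ (γ - 2)) (M ^ (γ - 2))) / 4 * (x - y) ^ 2 ≤
      x ^ γ - y ^ γ - γ * y ^ (γ - 1) * (x - y) := by
  set κ := (γ - 1) * min (m ^ (γ - 2)) (M ^ (γ - 2)) with hκ
  have hxpos : 0 < x := lt_of_lt_of_le hm hx1
  have hypos : 0 < y := lt_of_lt_of_le hm hy1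
  have hγ0 : (0:ℝ) < γ := by linarith
  have hp : (0:ℝ) < γ - 1 := by linarith
  have hps : ∀ s t : ℝ, m ≤ s → s ≤ M → m ≤ t → t ≤ M → t ≤ s →
      κ * (s - t) ≤ s ^ (γ - 1) - t ^ (γ - 1) := by
    intro s t h1 h2 h3 h4 h5
    have := rpow_slope_lb (p := γ - 1) hm hp h1 h2 h3 h4 h5
    have he : γ - 1 - 1 = γ - 2 := by ring
    rw [he] at this
    calc κ * (s - t) = (γ - 1) * min (m ^ (γ - 2)) (M ^ (γ - 2)) * (s - t) := by rw [hκ]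
      _ ≤ s ^ (γ - 1) - t ^ (γ - 1) := this
  rcases le_total y x with hxy | hxy
  · set z := (x + y) / 2 with hz
    have hz1 : m ≤ z := by simp only [hz]; linarith
    have hz2 : z ≤ M := by simp only [hz]; linarith
    have hzpos : 0 < z := lt_of_lt_of_le hm hz1
    have A1 := rpow_tangent_ge hxpos.le hzpos hγ.le
    have A2 := rpow_tangent_ge hzpos.le hypos hγ.le
    have A3 := hps z y hz1 hz2 hy1 hy2 (by simp only [hz]; linarith)
    have A4 := mul_le_mul_of_nonneg_right A3 (show (0:ℝ) ≤ x - z by simp only [hz]; linarith)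
    have A5 := mul_le_mul_of_nonneg_left A4 hγ0.le
    have hzz : z - y = (x - y) / 2 := by simp only [hz]; ring
    have hzz' : x - z = (x - y) / 2 := by simp only [hz]; ring
    rw [hzz, hzz'] at A5
    rw [hzz'] at A1
    rw [hzz] at A2
    nlinarith [A1, A2, A5]
  · set z := (x + y) / 2 with hz
    have hz1 : m ≤ z := by simp only [hz]; linarith
    have hz2 : z ≤ M := by simp only [hz]; linarith
    have hzpos : 0 < z := lt_of_lt_of_le hm hz1
    have A1 := rpow_tangent_ge hxpos.le hzpos hγ.le
    have A2 := rpow_tangent_ge hzpos.le hypos hγ.le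
    have A3 := hps y z hy1 hy2 hz1 hz2 (by simp only [hz]; linarith)
    have A4 := mul_le_mul_of_nonneg_right A3 (show (0:ℝ) ≤ z - x by simp only [hz]; linarith)
    have A5 := mul_le_mul_of_nonneg_left A4 hγ0.le
    have hzz : y - z = (y - x) / 2 := by simp only [hz]; ring
    have hzz' : z - x = (y - x) / 2 := by simp only [hz]; ring
    have hzz2 : x - z = -((y - x) / 2) := by simp only [hz]; ring
    have hzz3 : z - y = -((y - x) / 2) := by simp only [hz]; ring
    rw [hzz, hzz'] at A5
    rw [hzz2] at A1
    rw [hzz3] at A2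
    nlinarith [A1, A2, A5]

/-- Coercivity for small `x`. -/
lemma G_small {γ x y : ℝ} (hγ : 1 < γ) (hy : 0 < y) (hx0 : 0 ≤ x)
    (hx : x ≤ (γ - 1) / (2 * γ) * y) :
    (γ - 1) / 2 * y ^ γ ≤ x ^ γ - y ^ γ - γ * y ^ (γ - 1) * (x - y) := by
  have hyp1 : y ^ (γ - 1) * y = y ^ γ := by
    rw [← Real.rpow_add_one hy.ne' (γ - 1)]; ring_nf
  have hxg : 0 ≤ x ^ γ := Real.rpow_nonneg hx0 γ
  have hyg : 0 < y ^ (γ - 1) := Real.rpow_pos_of_pos hy _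
  have h2 : y ^ (γ - 1) * x ≤ y ^ (γ - 1) * ((γ - 1) / (2 * γ) * y) :=
    mul_le_mul_of_nonneg_left hx hyg.le
  have hγ0 : (0:ℝ) < γ := by linarith
  have h3 : y ^ (γ - 1) * ((γ - 1) / (2 * γ) * y) = (γ - 1) / (2 * γ) * y ^ γ := by
    rw [← hyp1]; ring
  rw [h3] at h2
  have h4 : γ * (y ^ (γ - 1) * x) ≤ γ * ((γ - 1) / (2 * γ) * y ^ γ) :=
    mul_le_mul_of_nonneg_left h2 hγ0.le
  have h5 : γ * ((γ - 1) / (2 * γ) * y ^ γ) = (γ - 1) / 2 * y ^ γ := by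
    field_simp
  nlinarith [h4, hyp1]

/-- Coercivity (linear growth) for large `x`. -/
lemma G_large {γ ρmax x y : ℝ} (hγ : 1 < γ) (hρ : 0 < ρmax)
    (hy0 : 0 < y) (hy2 : y ≤ ρmax)
    (hx : max 1 ((2 * γ) ^ (1 / (γ - 1))) * ρmax ≤ x) :
    γ * ρmax ^ (γ - 1) * x ≤ x ^ γ - y ^ γ - γ * y ^ (γ - 1) * (x - y) := by
  set K := max 1 ((2 * γ) ^ (1 / (γ - 1))) with hK
  have hK1 : (1:ℝ) ≤ K := le_max_left _ _
  have hKpos : (0:ℝ) < K := by linarith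
  have hxpos : (0:ℝ) < x := lt_of_lt_of_le (by positivity) hx
  have hγ0 : (0:ℝ) < γ := by linarith
  have hp : (0:ℝ) < γ - 1 := by linarith
  have hxx : x ^ (γ - 1) * x = x ^ γ := by
    rw [← Real.rpow_add_one hxpos.ne' (γ - 1)]; ring_nf
  have hyy : y ^ (γ - 1) * y = y ^ γ := by
    rw [← Real.rpow_add_one hy0.ne' (γ - 1)]; ring_nf
  have hyg : 0 ≤ y ^ γ := Real.rpow_nonneg hy0.le γ
  -- K ^ (γ-1) ≥ 2γ
  have hKg : (2 * γ : ℝ) ≤ K ^ (γ - 1) := by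
    have h1 : ((2 * γ) ^ (1 / (γ - 1)) : ℝ) ≤ K := le_max_right _ _
    have h2 : ((2 * γ) ^ (1 / (γ - 1)) : ℝ) ^ (γ - 1) ≤ K ^ (γ - 1) :=
      Real.rpow_le_rpow (Real.rpow_nonneg (by linarith) _) h1 hp.le
    have h3 : ((2 * γ) ^ (1 / (γ - 1)) : ℝ) ^ (γ - 1) = 2 * γ := by
      rw [← Real.rpow_mul (by linarith : (0:ℝ) ≤ 2 * γ), one_div,
        inv_mul_cancel₀ hp.ne', Real.rpow_one]
    linarith
  have hxlb : 2 * γ * ρmax ^ (γ - 1) ≤ x ^ (γ - 1) := by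
    have h1 : (K * ρmax) ^ (γ - 1) ≤ x ^ (γ - 1) :=
      Real.rpow_le_rpow (by positivity) hx hp.le
    have h2 : (K * ρmax) ^ (γ - 1) = K ^ (γ - 1) * ρmax ^ (γ - 1) :=
      Real.mul_rpow hKpos.le hρ.le
    have h3 : 2 * γ * ρmax ^ (γ - 1) ≤ K ^ (γ - 1) * ρmax ^ (γ - 1) :=
      mul_le_mul_of_nonneg_right hKg (Real.rpow_nonneg hρ.le _)
    linarith
  have hyub : y ^ (γ - 1) ≤ ρmax ^ (γ - 1) := Real.rpow_le_rpow hy0.le hy2 hp.le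
  nlinarith [mul_le_mul_of_nonneg_right hxlb hxpos.le,
    mul_le_mul_of_nonneg_right hyub hxpos.le, hxx, hyy, hyg,
    mul_le_mul_of_nonneg_left (mul_le_mul_of_nonneg_right hyub hxpos.le) hγ0.le]

lemma EP_eq {a γ x y : ℝ} (hγ : 1 < γ) :
    EP a γ x y = a / (γ - 1) * (x ^ γ - y ^ γ - γ * y ^ (γ - 1) * (x - y)) := by
  have h : γ - 1 ≠ 0 := by intro h; apply absurd hγ; rw [show γ = 1 by linarith]; simp
  unfold EP Ppot dPpot
  field_simp
  ring

lemma EP_nonneg {a γ x y : ℝ} (ha : 0 < a) (hγ : 1 < γ) (hx : 0 ≤ x) (hy : 0 < y) :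
    0 ≤ EP a γ x y := by
  rw [EP_eq hγ]
  have := rpow_tangent_ge hx hy hγ.le
  have hA : 0 ≤ a / (γ - 1) := le_of_lt (div_pos ha (by linarith))
  nlinarith

lemma key_pointwise (a γ ρmin ρmax δ : ℝ) (ha : 0 < a) (hγ : 1 < γ)
    (h0 : 0 < ρmin) (hle : ρmin ≤ ρmax) (hδ0 : 0 < δ) :
    ∃ C : ℝ, 0 < C ∧ ∀ ρ r t : ℝ, 0 ≤ ρ → ρmin ≤ r → r ≤ ρmax → 0 ≤ t →
      |ρ - r| * t ≤ δ * t ^ 2 + C * ((1 / 2) * ρ * t ^ 2 + EP a γ ρ r) := by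
  have hγ1 : (0:ℝ) < γ - 1 := by linarith
  have hγ0 : (0:ℝ) < γ := by linarith
  have hρmax : (0:ℝ) < ρmax := lt_of_lt_of_le h0 hle
  set ε : ℝ := (γ - 1) / (2 * γ) with hε
  have hε0 : 0 < ε := div_pos hγ1 (by positivity)
  have hε1 : ε ≤ 1 := by rw [hε, div_le_one (by linarith : (0:ℝ) < 2 * γ)]; linarith
  set m₀ : ℝ := ε * ρmin with hm₀
  have hm₀0 : 0 < m₀ := mul_pos hε0 h0
  set K : ℝ := max 1 ((2 * γ) ^ (1 / (γ - 1))) with hK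
  have hK1 : (1:ℝ) ≤ K := le_max_left _ _
  set M : ℝ := K * ρmax with hM
  have hMρ : ρmax ≤ M := by
    calc ρmax = 1 * ρmax := by ring
      _ ≤ K * ρmax := mul_le_mul_of_nonneg_right hK1 hρmax.le
  have hm₀ρ : m₀ ≤ ρmin := by
    calc m₀ = ε * ρmin := rfl
      _ ≤ 1 * ρmin := mul_le_mul_of_nonneg_right hε1 h0.le
      _ = ρmin := by ring
  have hm₀M : m₀ ≤ M := le_trans hm₀ρ (le_trans hle hMρ)
  set κ : ℝ := (γ - 1) * min (m₀ ^ (γ - 2)) (M ^ (γ - 2)) with hκ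
  have hκ0 : 0 < κ := by
    apply mul_pos hγ1
    exact lt_min (Real.rpow_pos_of_pos hm₀0 _) (Real.rpow_pos_of_pos (lt_of_lt_of_le hm₀0 hm₀M) _)
  set A : ℝ := a / (γ - 1) with hA
  have hA0 : 0 < A := div_pos ha hγ1
  set c₀ : ℝ := A * ((γ - 1) / 2 * ρmin ^ γ) with hc₀
  have hc₀0 : 0 < c₀ := by
    apply mul_pos hA0; apply mul_pos (by linarith); exact Real.rpow_pos_of_pos h0 _
  set c₁ : ℝ := A * (γ * ρmax ^ (γ - 1)) with hc₁
  have hc₁0 : 0 < c₁ := by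
    apply mul_pos hA0; apply mul_pos hγ0; exact Real.rpow_pos_of_pos hρmax _
  set c₂ : ℝ := A * (γ * κ / 4) with hc₂
  have hc₂0 : 0 < c₂ := by
    apply mul_pos hA0; positivity
  refine ⟨max 1 (max (1 / (2 * c₁)) (max (ρmax ^ 2 / (4 * δ * c₀)) (1 / (4 * δ * c₂)))),
    lt_of_lt_of_le one_pos (le_max_left _ _), ?_⟩
  set C : ℝ := max 1 (max (1 / (2 * c₁)) (max (ρmax ^ 2 / (4 * δ * c₀)) (1 / (4 * δ * c₂)))) with hC
  have hC1 : (1:ℝ) ≤ C := le_max_left _ _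
  have hC0 : (0:ℝ) < C := lt_of_lt_of_le one_pos hC1
  have hCc1 : 1 ≤ 2 * C * c₁ := by
    have h1 : 1 / (2 * c₁) ≤ C := le_trans (le_max_left _ _) (le_max_right _ _)
    have := (div_le_iff₀ (by linarith : (0:ℝ) < 2 * c₁)).mp h1
    linarith [this]
  have hCc0 : ρmax ^ 2 ≤ 4 * δ * C * c₀ := by
    have h1 : ρmax ^ 2 / (4 * δ * c₀) ≤ C :=
      le_trans (le_max_left _ _) (le_trans (le_max_right _ _) (le_max_right _ _))
    have := (div_le_iff₀ (by positivity : (0:ℝ) < 4 * δ * c₀)).mp h1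
    linarith [this]
  have hCc2 : 1 ≤ 4 * δ * C * c₂ := by
    have h1 : 1 / (4 * δ * c₂) ≤ C :=
      le_trans (le_max_right _ _) (le_trans (le_max_right _ _) (le_max_right _ _))
    have := (div_le_iff₀ (by positivity : (0:ℝ) < 4 * δ * c₂)).mp h1
    linarith [this]
  intro ρ r t hρ0 hr1 hr2 ht
  have hr0 : 0 < r := lt_of_lt_of_le h0 hr1
  have hEPr : EP a γ ρ r = A * (ρ ^ γ - r ^ γ - γ * r ^ (γ - 1) * (ρ - r)) := by
    rw [EP_eq hγ, hA]
  have hEP0 : 0 ≤ EP a γ ρ r := EP_nonneg ha hγ hρ0 hr0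
  have hX : 0 ≤ (1 / 2) * ρ * t ^ 2 := by positivity
  rcases le_or_gt M ρ with hbig | hnotbig
  · -- large density
    have hG := G_large (ρmax := ρmax) (x := ρ) (y := r) hγ hρmax hr0 hr2 hbig
    have hEPl : c₁ * ρ ≤ EP a γ ρ r := by
      rw [hEPr, hc₁]
      calc A * (γ * ρmax ^ (γ - 1)) * ρ = A * (γ * ρmax ^ (γ - 1) * ρ) := by ring
        _ ≤ A * (ρ ^ γ - r ^ γ - γ * r ^ (γ - 1) * (ρ - r)) :=
          mul_le_mul_of_nonneg_left hG hA0.le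
    have habs : |ρ - r| = ρ - r := abs_of_nonneg (by linarith [le_trans hr2 (le_trans hMρ hbig)])
    rw [habs]
    have h1 : (ρ - r) * t ≤ ρ * t := mul_le_mul_of_nonneg_right (by linarith) ht
    have h2 : ρ * t ≤ (1 / 2) * ρ * t ^ 2 + (1 / 2) * ρ := by
      linarith [mul_nonneg hρ0 (sq_nonneg (t - 1))]
    have h3 : C * (c₁ * ρ) ≤ C * EP a γ ρ r := mul_le_mul_of_nonneg_left hEPl hC0.le
    have h4 : (1 / 2) * ρ ≤ C * (c₁ * ρ) := by
      linarith [mul_le_mul_of_nonneg_right hCc1 hρ0]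
    have h5 : (1 / 2) * ρ * t ^ 2 ≤ C * ((1 / 2) * ρ * t ^ 2) := by
      linarith [mul_nonneg (by linarith : (0:ℝ) ≤ C - 1) hX]
    have h6 : 0 ≤ δ * t ^ 2 := by positivity
    have h7 : C * ((1 / 2) * ρ * t ^ 2 + EP a γ ρ r) =
        C * ((1 / 2) * ρ * t ^ 2) + C * EP a γ ρ r := by ring
    linarith
  rcases le_or_gt ρ m₀ with hsmall | hmid
  · -- small density
    have hρε : ρ ≤ (γ - 1) / (2 * γ) * r := by
      have h1 : ε * ρmin ≤ ε * r := mul_le_mul_of_nonneg_left hr1 hε0.le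
      rw [hε] at h1
      rw [hm₀, hε] at hsmall
      linarith
    have hG := G_small (x := ρ) (y := r) hγ hr0 hρ0 hρε
    have hrγ : ρmin ^ γ ≤ r ^ γ := Real.rpow_le_rpow h0.le hr1 hγ0.le
    have hEPs : c₀ ≤ EP a γ ρ r := by
      rw [hEPr, hc₀]
      have : (γ - 1) / 2 * ρmin ^ γ ≤ (γ - 1) / 2 * r ^ γ :=
        mul_le_mul_of_nonneg_left hrγ (by linarith)
      calc A * ((γ - 1) / 2 * ρmin ^ γ) ≤ A * ((γ - 1) / 2 * r ^ γ) :=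
            mul_le_mul_of_nonneg_left this hA0.le
        _ ≤ A * (ρ ^ γ - r ^ γ - γ * r ^ (γ - 1) * (ρ - r)) :=
            mul_le_mul_of_nonneg_left hG hA0.le
    have habs : |ρ - r| = r - ρ := by
      rw [abs_of_nonpos (by linarith [le_trans hsmall hm₀ρ] : ρ - r ≤ 0)]; ring
    rw [habs]
    rw [← mul_le_mul_iff_right₀ (show (0:ℝ) < 4 * δ by linarith)]
    have H1 : (r - ρ) * t ≤ ρmax * t := mul_le_mul_of_nonneg_right (by linarith) ht
    have H3 : 4 * δ * C * c₀ ≤ 4 * δ * C * EP a γ ρ r :=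
      mul_le_mul_of_nonneg_left hEPs (by positivity)
    have K1 := mul_le_mul_of_nonneg_left H1 (by linarith : (0:ℝ) ≤ 4 * δ)
    have K2 : 0 ≤ (2 * δ * t - ρmax) ^ 2 := sq_nonneg _
    have K5 : 0 ≤ 4 * δ * C * ((1 / 2) * ρ * t ^ 2) := by positivity
    linarith [K1, K2, K5, hCc0, H3]
  · -- middle density
    have hG := G_quad (γ := γ) (m := m₀) (M := M) (x := ρ) (y := r) hγ hm₀0
      hmid.le hnotbig.le (le_trans hm₀ρ hr1) (le_trans hr2 hMρ)
    have hq : c₂ * (ρ - r) ^ 2 ≤ EP a γ ρ r := by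
      rw [hEPr, hc₂, hκ]
      calc A * (γ * ((γ - 1) * min (m₀ ^ (γ - 2)) (M ^ (γ - 2))) / 4) * (ρ - r) ^ 2
          = A * (γ * ((γ - 1) * min (m₀ ^ (γ - 2)) (M ^ (γ - 2))) / 4 * (ρ - r) ^ 2) := by
            ring
        _ ≤ A * (ρ ^ γ - r ^ γ - γ * r ^ (γ - 1) * (ρ - r)) :=
            mul_le_mul_of_nonneg_left hG hA0.le
    rw [← mul_le_mul_iff_right₀ (show (0:ℝ) < 4 * δ by linarith)]
    have K1 : 4 * δ * C * (c₂ * (ρ - r) ^ 2) ≤ 4 * δ * C * EP a γ ρ r :=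
      mul_le_mul_of_nonneg_left hq (by positivity)
    have K2 : 0 ≤ (2 * δ * t - |ρ - r|) ^ 2 := sq_nonneg _
    have K3 : |ρ - r| ^ 2 = (ρ - r) ^ 2 := sq_abs _
    have K4 : 1 * (ρ - r) ^ 2 ≤ 4 * δ * C * c₂ * (ρ - r) ^ 2 :=
      mul_le_mul_of_nonneg_right hCc2 (sq_nonneg _)
    have K5 : 0 ≤ 4 * δ * C * ((1 / 2) * ρ * t ^ 2) := by positivity
    linarith [K1, K2, K3, K4, K5]

/-- Absorption of the residual term `∫ |ρ - r| ‖u - U‖` by the relative energy: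
for `d ≥ 1`, `a > 0`, `γ > 1`, `0 < ρmin ≤ ρmax` and any `δ ∈ (0,1)` there exists
`C > 0`, depending only on `a, γ, ρmin, ρmax, δ` (and not on `μ, ρ, r, u, U`), such that
for all measurable `ρ, r : X → ℝ` and `u, U : X → ℝ^d` with `0 ≤ ρ` a.e. and
`ρmin ≤ r ≤ ρmax` a.e., one has
`∫ |ρ - r| ‖u - U‖ dμ ≤ δ ∫ ‖u - U‖² dμ + C ∫ ((1/2) ρ ‖u - U‖² + E_P(ρ|r)) dμ`,
the integrals being Lebesgue integrals with values in `[0,∞]`. -/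
theorem abs_mul_norm_le_relative_energy
    {X : Type*} [MeasurableSpace X] (d : ℕ) (hd : 1 ≤ d)
    (a γ ρmin ρmax δ : ℝ) (ha : 0 < a) (hγ : 1 < γ)
    (h0 : 0 < ρmin) (hle : ρmin ≤ ρmax) (hδ : δ ∈ Set.Ioo (0 : ℝ) 1) :
    ∃ C : ℝ, 0 < C ∧
      ∀ (μ : Measure X) (ρ r : X → ℝ) (u U : X → EuclideanSpace ℝ (Fin d)),
        Measurable ρ → Measurable r → Measurable u → Measurable U →
        (∀ᵐ x ∂μ, 0 ≤ ρ x) → (∀ᵐ x ∂μ, ρmin ≤ r x ∧ r x ≤ ρmax) →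
        ∫⁻ x, ENNReal.ofReal (|ρ x - r x| * ‖u x - U x‖) ∂μ ≤
          ENNReal.ofReal δ * ∫⁻ x, ENNReal.ofReal (‖u x - U x‖ ^ 2) ∂μ +
          ENNReal.ofReal C *
            ∫⁻ x, ENNReal.ofReal ((1 / 2) * ρ x * ‖u x - U x‖ ^ 2 + EP a γ (ρ x) (r x)) ∂μ := by
  obtain ⟨C, hC0, hkey⟩ := key_pointwise a γ ρmin ρmax δ ha hγ h0 hle hδ.1
  refine ⟨C, hC0, ?_⟩
  intro μ ρ r u U hρm hrm hum hUm hρ0 hrb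
  have hmeas : Measurable fun x => ENNReal.ofReal δ * ENNReal.ofReal (‖u x - U x‖ ^ 2) := by
    apply Measurable.const_mul
    exact (((hum.sub hUm).norm).pow_const 2).ennreal_ofReal
  have hae : ∀ᵐ x ∂μ,
      ENNReal.ofReal (|ρ x - r x| * ‖u x - U x‖) ≤
        ENNReal.ofReal δ * ENNReal.ofReal (‖u x - U x‖ ^ 2) +
        ENNReal.ofReal C *
          ENNReal.ofReal ((1 / 2) * ρ x * ‖u x - U x‖ ^ 2 + EP a γ (ρ x) (r x)) := by
    filter_upwards [hρ0, hrb] with x h1 h2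
    have hk := hkey (ρ x) (r x) ‖u x - U x‖ h1 h2.1 h2.2 (norm_nonneg _)
    have he0 : 0 ≤ (1 / 2) * ρ x * ‖u x - U x‖ ^ 2 + EP a γ (ρ x) (r x) := by
      have hEPn := EP_nonneg (x := ρ x) (y := r x) ha hγ h1 (lt_of_lt_of_le h0 h2.1)
      have : 0 ≤ (1 / 2) * ρ x * ‖u x - U x‖ ^ 2 := by positivity
      linarith
    calc ENNReal.ofReal (|ρ x - r x| * ‖u x - U x‖)
        ≤ ENNReal.ofReal (δ * ‖u x - U x‖ ^ 2 +
            C * ((1 / 2) * ρ x * ‖u x - U x‖ ^ 2 + EP a γ (ρ x) (r x))) :=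
          ENNReal.ofReal_le_ofReal hk
      _ = ENNReal.ofReal (δ * ‖u x - U x‖ ^ 2) +
          ENNReal.ofReal (C * ((1 / 2) * ρ x * ‖u x - U x‖ ^ 2 + EP a γ (ρ x) (r x))) :=
          ENNReal.ofReal_add (mul_nonneg hδ.1.le (by positivity)) (mul_nonneg hC0.le he0)
      _ = ENNReal.ofReal δ * ENNReal.ofReal (‖u x - U x‖ ^ 2) +
          ENNReal.ofReal C *
            ENNReal.ofReal ((1 / 2) * ρ x * ‖u x - U x‖ ^ 2 + EP a γ (ρ x) (r x)) := by
          rw [ENNReal.ofReal_mul hδ.1.le, ENNReal.ofReal_mul hC0.le]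
  calc ∫⁻ x, ENNReal.ofReal (|ρ x - r x| * ‖u x - U x‖) ∂μ
      ≤ ∫⁻ x, (ENNReal.ofReal δ * ENNReal.ofReal (‖u x - U x‖ ^ 2) +
          ENNReal.ofReal C *
            ENNReal.ofReal ((1 / 2) * ρ x * ‖u x - U x‖ ^ 2 + EP a γ (ρ x) (r x))) ∂μ :=
        lintegral_mono_ae hae
    _ = (∫⁻ x, ENNReal.ofReal δ * ENNReal.ofReal (‖u x - U x‖ ^ 2) ∂μ) +
        ∫⁻ x, ENNReal.ofReal C *
          ENNReal.ofReal ((1 / 2) * ρ x * ‖u x - U x‖ ^ 2 + EP a γ (ρ x) (r x)) ∂μ :=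
        lintegral_add_left hmeas _
    _ = ENNReal.ofReal δ * ∫⁻ x, ENNReal.ofReal (‖u x - U x‖ ^ 2) ∂μ +
        ENNReal.ofReal C *
          ∫⁻ x, ENNReal.ofReal ((1 / 2) * ρ x * ‖u x - U x‖ ^ 2 + EP a γ (ρ x) (r x)) ∂μ := by
        rw [lintegral_const_mul' _ _ ENNReal.ofReal_ne_top,
          lintegral_const_mul' _ _ ENNReal.ofReal_ne_top]
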